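/- Let G be a weighted graph on N vertices with combinatorial Laplacian L, E_F a contracted matching of G with associated averaging projection Π_F, and Π_F^⊥ = I_N − Π_F. Then for every vector x ∈ ℝ^N, (Π_F^⊥ x)ᵀ L (Π_F^⊥ x) = (1/4) Σ_{{i,j} ∈ E_F} (x(i) − x(j))² (d_i + d_j + 2 W(i,j)). -/
import Mathlib


open Matrix

/-- The combinatorial Laplacian `L = D - W`. -/
def lap {N : ℕ} (W : Matrix (Fin N) (Fin N) ℝ) : Matrix (Fin N) (Fin N) ℝ :=
  Matrix.diagonal (fun i => ∑ j, W i j) - W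

/-- `W` is the weight matrix of a weighted graph: symmetric, nonnegative, zero diagonal. -/
def IsWeightedGraph {N : ℕ} (W : Matrix (Fin N) (Fin N) ℝ) : Prop :=
  (∀ i j, W i j = W j i) ∧ (∀ i j, 0 ≤ W i j) ∧ (∀ i, W i i = 0)

/-- A contracted matching of the weighted graph given by `W`: a finite set of edges
(each recorded once, as an ordered pair `(i,j)` with `W i j > 0` and `i ≠ j`) such that for any
two distinct edges `{i,j}`, `{p,q}` all of `W i p`, `W i q`, `W j p`, `W j q` vanish
(in particular the edges are vertex-disjoint, and no vertex of one edge is adjacent to a vertex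
of another one). -/
def IsContractedMatching {N : ℕ} (W : Matrix (Fin N) (Fin N) ℝ)
    (EF : Finset (Fin N × Fin N)) : Prop :=
  (∀ e ∈ EF, e.1 ≠ e.2 ∧ 0 < W e.1 e.2) ∧
  (∀ e ∈ EF, ∀ e' ∈ EF, e ≠ e' →
    W e.1 e'.1 = 0 ∧ W e.1 e'.2 = 0 ∧ W e.2 e'.1 = 0 ∧ W e.2 e'.2 = 0)

open scoped Classical in
/-- The averaging projection `Π_F` associated with a (vertex-disjoint) set of edges `E_F`:
`(Π_F x)(i) = (Π_F x)(j) = (x(i)+x(j))/2` for every `{i,j} ∈ E_F`, and `(Π_F x)(ℓ) = x(ℓ)` for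
every vertex `ℓ` not incident to an edge of `E_F`. -/
noncomputable def avgProj {N : ℕ} (EF : Finset (Fin N × Fin N)) :
    Matrix (Fin N) (Fin N) ℝ :=
  Matrix.of fun a b =>
    if a = b then (if ∃ e ∈ EF, a = e.1 ∨ a = e.2 then (1 : ℝ) / 2 else 1)
    else if (a, b) ∈ EF ∨ (b, a) ∈ EF then 1 / 2 else 0

section Aux

variable {N : ℕ} {W : Matrix (Fin N) (Fin N) ℝ} {EF : Finset (Fin N × Fin N)}

/-- Two edges of a contracted matching sharing a vertex are equal. -/
lemma CM.edge_unique (hW : IsWeightedGraph W) (hEF : IsContractedMatching W EF)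
    {e e' : Fin N × Fin N} (he : e ∈ EF) (he' : e' ∈ EF) {a : Fin N}
    (ha : a = e.1 ∨ a = e.2) (ha' : a = e'.1 ∨ a = e'.2) : e = e' := by
  by_contra hne
  obtain ⟨h1, h2, h3, h4⟩ := hEF.2 e he e' he' hne
  have hpos := (hEF.1 e' he').2
  have hsym := hW.1
  rcases ha with rfl | h
  · rcases ha' with h | h
    · rw [h] at h2; linarith
    · rw [h, hsym] at h1; linarith
  · rcases ha' with h' | h'
    · rw [← h, h'] at h4; linarith
    · rw [← h, h', hsym] at h3; linarith

/-- Value of `(1 - Π_F)x` at a non-incident vertex. -/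
lemma CM.compl_apply_not_incident (x : Fin N → ℝ) {a : Fin N}
    (ha : ¬ ∃ e ∈ EF, a = e.1 ∨ a = e.2) :
    ((1 - avgProj EF) *ᵥ x) a = 0 := by
  classical
  have h : ∀ b : Fin N, avgProj EF a b = (1 : Matrix (Fin N) (Fin N) ℝ) a b := by
    intro b
    simp only [avgProj, Matrix.of_apply, Matrix.one_apply]
    by_cases hab : a = b
    · subst hab; simp [ha]
    · have : ¬ ((a, b) ∈ EF ∨ (b, a) ∈ EF) := by
        rintro (h1 | h1)
        · exact ha ⟨(a, b), h1, Or.inl rfl⟩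
        · exact ha ⟨(b, a), h1, Or.inr rfl⟩
      simp [hab, this]
  simp [Matrix.mulVec, dotProduct, Matrix.sub_apply, h]

/-- Value of `(1 - Π_F)x` at an incident vertex `a` with partner `b`. -/
lemma CM.compl_apply_incident (hW : IsWeightedGraph W) (hEF : IsContractedMatching W EF)
    (x : Fin N → ℝ) {e : Fin N × Fin N} (he : e ∈ EF) {a b : Fin N}
    (hab : (a = e.1 ∧ b = e.2) ∨ (a = e.2 ∧ b = e.1)) :
    ((1 - avgProj EF) *ᵥ x) a = (x a - x b) / 2 := by
  classical
  have hne12 : e.1 ≠ e.2 := (hEF.1 e he).1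
  have hanb : a ≠ b := by
    rcases hab with ⟨rfl, rfl⟩ | ⟨rfl, rfl⟩
    · exact hne12
    · exact hne12.symm
  have hamem : ∃ e' ∈ EF, a = e'.1 ∨ a = e'.2 := by
    exact ⟨e, he, by rcases hab with ⟨h, _⟩ | ⟨h, _⟩ <;> simp [h]⟩
  have hdiag : avgProj EF a a = 1 / 2 := by
    simp only [avgProj, Matrix.of_apply, if_pos rfl, if_pos hamem]
    simp
  have hpart : avgProj EF a b = 1 / 2 := by
    have hmem : (a, b) ∈ EF ∨ (b, a) ∈ EF := by
      rcases hab with ⟨h1, h2⟩ | ⟨h1, h2⟩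
      · left; rw [h1, h2]; exact he
      · right; rw [h1, h2]; exact he
    simp [avgProj, hanb, hmem]
  have hzero : ∀ c : Fin N, c ≠ a → c ≠ b → avgProj EF a c = 0 := by
    intro c hca hcb
    have hac : a ≠ c := fun h => hca h.symm
    have : ¬ ((a, c) ∈ EF ∨ (c, a) ∈ EF) := by
      rintro (h1 | h1)
      · have heq := CM.edge_unique hW hEF he h1
          (by rcases hab with ⟨h, _⟩ | ⟨h, _⟩ <;> simp [h]) (Or.inl rfl)
        rcases hab with ⟨ha1, hb2⟩ | ⟨ha2, hb1⟩
        · exact hcb (by rw [hb2, heq])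
        · exact hne12 (by rw [← ha2, heq])
      · have heq := CM.edge_unique hW hEF he h1
          (by rcases hab with ⟨h, _⟩ | ⟨h, _⟩ <;> simp [h]) (Or.inr rfl)
        rcases hab with ⟨ha1, hb2⟩ | ⟨ha2, hb1⟩
        · exact hne12 (by rw [← ha1, heq])
        · exact hcb (by rw [hb1, heq])
    simp [avgProj, hac, this]
  have hsum : ∑ c : Fin N, avgProj EF a c * x c = (x a + x b) / 2 := by
    have hsub : ({a, b} : Finset (Fin N)) ⊆ Finset.univ := Finset.subset_univ _
    rw [← Finset.sum_subset hsub]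
    · rw [Finset.sum_pair hanb, hdiag, hpart]; ring
    · intro c _ hc
      simp only [Finset.mem_insert, Finset.mem_singleton, not_or] at hc
      rw [hzero c hc.1 hc.2, zero_mul]
  have : ((1 - avgProj EF) *ᵥ x) a = x a - ∑ c : Fin N, avgProj EF a c * x c := by
    simp [Matrix.mulVec, dotProduct, Matrix.sub_apply, sub_mul,
      Finset.sum_sub_distrib, Matrix.one_apply, ite_mul, Finset.sum_ite_eq]
  rw [this, hsum]; ring

end Aux

section Aux2

variable {N : ℕ} {W : Matrix (Fin N) (Fin N) ℝ} {EF : Finset (Fin N × Fin N)}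

lemma CM.cross_sum (hW : IsWeightedGraph W) (hEF : IsContractedMatching W EF)
    (x : Fin N → ℝ) {e : Fin N × Fin N} (he : e ∈ EF) {a b : Fin N}
    (hab : (a = e.1 ∧ b = e.2) ∨ (a = e.2 ∧ b = e.1)) :
    ∑ j, W a j * ((1 - avgProj EF) *ᵥ x) j = W a b * ((1 - avgProj EF) *ᵥ x) b := by
  classical
  apply Finset.sum_eq_single
  · intro c _ hcb
    by_cases hc : ∃ e' ∈ EF, c = e'.1 ∨ c = e'.2
    · obtain ⟨e', he', hce'⟩ := hc
      by_cases hee : e' = e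
      · subst hee
        rcases hab with ⟨ha, hb⟩ | ⟨ha, hb⟩
        · rcases hce' with hc1 | hc2
          · rw [hc1, ← ha, hW.2.2 a, zero_mul]
          · exact absurd (hc2.trans hb.symm) hcb
        · rcases hce' with hc1 | hc2
          · exact absurd (hc1.trans hb.symm) hcb
          · rw [hc2, ← ha, hW.2.2 a, zero_mul]
      · obtain ⟨z1, z2, z3, z4⟩ := hEF.2 e he e' he' (fun h => hee h.symm)
        have : W a c = 0 := by
          rcases hab with ⟨ha, _⟩ | ⟨ha, _⟩ <;> rcases hce' with hc | hc <;>
            rw [ha, hc] <;> assumption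
        rw [this, zero_mul]
    · rw [CM.compl_apply_not_incident x hc, mul_zero]
  · intro hb
    exact absurd (Finset.mem_univ b) hb


/-- for a contracted matching `E_F` with averaging projection `Π_F` and
`Π_F^⊥ = I − Π_F`, every `x ∈ ℝ^N` satisfies
`(Π_F^⊥ x)ᵀ L (Π_F^⊥ x) = (1/4) Σ_{{i,j} ∈ E_F} (x(i) − x(j))² (d_i + d_j + 2 W(i,j))`. -/
theorem avgProj_compl_laplacian_quadform {N : ℕ} (W : Matrix (Fin N) (Fin N) ℝ)
    (hW : IsWeightedGraph W) (EF : Finset (Fin N × Fin N))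
    (hEF : IsContractedMatching W EF) (x : Fin N → ℝ) :
    ((1 - avgProj EF) *ᵥ x) ⬝ᵥ (lap W *ᵥ ((1 - avgProj EF) *ᵥ x)) =
      (1 / 4) * ∑ e ∈ EF, (x e.1 - x e.2) ^ 2 *
        ((∑ ℓ, W e.1 ℓ) + (∑ ℓ, W e.2 ℓ) + 2 * W e.1 e.2) := by
  classical
  have hlap : ∀ i, (lap W *ᵥ ((1 - avgProj EF) *ᵥ x)) i =
      (∑ j, W i j) * ((1 - avgProj EF) *ᵥ x) i -
        ∑ j, W i j * ((1 - avgProj EF) *ᵥ x) j := by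
    intro i
    simp [lap, Matrix.sub_mulVec, Matrix.mulVec, dotProduct, Matrix.sub_apply, sub_mul,
      Finset.sum_sub_distrib, Matrix.diagonal_apply, ite_mul, Finset.sum_ite_eq]
  set f : Fin N → ℝ :=
    fun i => ((1 - avgProj EF) *ᵥ x) i * (lap W *ᵥ ((1 - avgProj EF) *ᵥ x)) i with hf
  have key : ∀ e ∈ EF, f e.1 + f e.2 =
      (1 / 4) * ((x e.1 - x e.2) ^ 2 *
        ((∑ ℓ, W e.1 ℓ) + (∑ ℓ, W e.2 ℓ) + 2 * W e.1 e.2)) := by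
    intro e he
    have h1 := CM.compl_apply_incident hW hEF x he (Or.inl ⟨rfl, rfl⟩)
    have h2 := CM.compl_apply_incident hW hEF x he (Or.inr ⟨rfl, rfl⟩)
    have c1 := CM.cross_sum hW hEF x he (Or.inl ⟨rfl, rfl⟩)
    have c2 := CM.cross_sum hW hEF x he (Or.inr ⟨rfl, rfl⟩)
    have hsym : W e.2 e.1 = W e.1 e.2 := hW.1 _ _
    simp only [hf]
    rw [hlap, hlap, c1, c2, h1, h2, hsym]
    ring
  have hS : ∀ i : Fin N, i ∉ EF.biUnion (fun e => ({e.1, e.2} : Finset (Fin N))) →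
      f i = 0 := by
    intro i hi
    have : ((1 - avgProj EF) *ᵥ x) i = 0 := by
      apply CM.compl_apply_not_incident
      rintro ⟨e, he, hie⟩
      exact hi (Finset.mem_biUnion.2 ⟨e, he, by rcases hie with h | h <;> simp [h]⟩)
    simp [hf, this]
  have hdisj : (↑EF : Set (Fin N × Fin N)).PairwiseDisjoint
      (fun e => ({e.1, e.2} : Finset (Fin N))) := by
    intro e he e' he' hne
    simp only [Function.onFun]
    rw [Finset.disjoint_left]
    intro i hi hi'
    simp only [Finset.mem_insert, Finset.mem_singleton] at hi hi'
    exact hne (CM.edge_unique hW hEF (Finset.mem_coe.1 he) (Finset.mem_coe.1 he') hi hi')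
  calc ((1 - avgProj EF) *ᵥ x) ⬝ᵥ (lap W *ᵥ ((1 - avgProj EF) *ᵥ x))
      = ∑ i, f i := rfl
    _ = ∑ i ∈ EF.biUnion (fun e => ({e.1, e.2} : Finset (Fin N))), f i :=
        (Finset.sum_subset (Finset.subset_univ _) (fun i _ hi => hS i hi)).symm
    _ = ∑ e ∈ EF, ∑ i ∈ ({e.1, e.2} : Finset (Fin N)), f i := Finset.sum_biUnion hdisj
    _ = ∑ e ∈ EF, (f e.1 + f e.2) :=
        Finset.sum_congr rfl (fun e he => Finset.sum_pair (hEF.1 e he).1)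
    _ = ∑ e ∈ EF, (1 / 4) * ((x e.1 - x e.2) ^ 2 *
          ((∑ ℓ, W e.1 ℓ) + (∑ ℓ, W e.2 ℓ) + 2 * W e.1 e.2)) :=
        Finset.sum_congr rfl key
    _ = (1 / 4) * ∑ e ∈ EF, (x e.1 - x e.2) ^ 2 *
          ((∑ ℓ, W e.1 ℓ) + (∑ ℓ, W e.2 ℓ) + 2 * W e.1 e.2) := (Finset.mul_sum _ _ _).symm


end Aux2
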